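/- Consider an N-player game with strategy sets K_i and cost functions f_i, and suppose that for all players i, j, all x_i, x_i + y_i ∈ K_i, all x_j, x_j + y_j ∈ K_j, and all x_{-{i,j}} ∈ K_{-{i,j}}, it holds that f_i(x_i + y_i, x_j + y_j, x_{-{i,j}}) − f_i(x_i, x_{-i}) < 0 if and only if f_j(x_j + y_j, x_i + y_i, x_{-{i,j}}) − f_j(x_j, x_{-j}) < 0. Then the game is an ordinal potential game, and for every player i the cost function f_i itself is an ordinal potential function. -/
import Mathlib


noncomputable section

/-- The set of joint strategy profiles of a game with strategy sets `K i ⊆ ℝ^{n i}`. -/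
def jointK {N : ℕ} {n : Fin N → ℕ}
    (K : ∀ i, Set (EuclideanSpace ℝ (Fin (n i)))) :
    Set (∀ i, EuclideanSpace ℝ (Fin (n i))) :=
  {x | ∀ i, x i ∈ K i}

/-- `φ` is an ordinal potential function for the game with strategy sets `K`, costs `f`. -/
def IsOrdinalPotential {N : ℕ} {n : Fin N → ℕ}
    (K : ∀ i, Set (EuclideanSpace ℝ (Fin (n i))))
    (f : Fin N → (∀ i, EuclideanSpace ℝ (Fin (n i))) → ℝ)
    (φ : (∀ i, EuclideanSpace ℝ (Fin (n i))) → ℝ) : Prop :=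
  ∀ i : Fin N, ∀ x ∈ jointK K, ∀ xi' ∈ K i,
    (f i (Function.update x i xi') - f i x < 0 ↔
      φ (Function.update x i xi') - φ x < 0)

/-- If for all pairs of distinct players `i, j` the simultaneous
deviation sign condition
`f_i(x_i+y_i, x_j+y_j, x₋) − f_i(x) < 0 ⇔ f_j(x_j+y_j, x_i+y_i, x₋) − f_j(x) < 0`
holds, then the game is an ordinal potential game, and each cost `f i` is itself an
ordinal potential function. -/
theorem stmt12 {N : ℕ} {n : Fin N → ℕ}
    (K : ∀ i, Set (EuclideanSpace ℝ (Fin (n i))))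
    (f : Fin N → (∀ i, EuclideanSpace ℝ (Fin (n i))) → ℝ)
    (h : ∀ i j : Fin N, i ≠ j → ∀ x ∈ jointK K,
      ∀ (yi : EuclideanSpace ℝ (Fin (n i))) (yj : EuclideanSpace ℝ (Fin (n j))),
        x i + yi ∈ K i → x j + yj ∈ K j →
        (f i (Function.update (Function.update x i (x i + yi)) j (x j + yj)) - f i x < 0 ↔
         f j (Function.update (Function.update x i (x i + yi)) j (x j + yj)) - f j x < 0)) :
    (∃ φ, IsOrdinalPotential K f φ) ∧ ∀ i : Fin N, IsOrdinalPotential K f (f i) := by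
  have key : ∀ j : Fin N, IsOrdinalPotential K f (f j) := by
    intro j i x hx xi' hxi'
    by_cases hij : i = j
    · subst hij; exact Iff.rfl
    · have := h i j hij x hx (xi' - x i) 0 (by simpa using hxi') (by simpa using hx j)
      have e : Function.update (Function.update x i xi') j (x j) = Function.update x i xi' := by
        rw [show x j = Function.update x i xi' j from
          (Function.update_of_ne (Ne.symm hij) _ _).symm, Function.update_eq_self]
      simpa [e] using this
  constructor
  · rcases N with _ | N
    · exact ⟨fun _ => 0, fun i => i.elim0⟩
    · exact ⟨f 0, key 0⟩
  · exact key
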